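/- arXiv:math/0611417 — 3 statements merged into one kernel-verified Lean document; each statement's English description precedes it below -/
import Mathlib

section
/- Let m ≥ 2 and let f : [0,1] → ℝ be m-times continuously differentiable with f'(x) > 0 for all x ∈ [0,1]. Define φ_t(x) = t·f(x) + (1 − t)·x for t ∈ [0,1] and x ∈ [0,1]. Then there exists a function v : [0,1] × ℝ → ℝ such that: (i) for each t ∈ [0,1], the map x ↦ v(t,x) is (m−1)-times continuously differentiable on ℝ and has compact support; (ii) v(t, t·f(x) + (1 − t)·x) = f(x) − x for all t ∈ [0,1] and all x ∈ [0,1]; and consequently (iii) φ_t(x) = x + ∫₀ᵗ v(s, φ_s(x)) ds for all t ∈ [0,1] and x ∈ [0,1], and in particular f(x) = φ₁(x) = x + ∫₀¹ v(t, φ_t(x)) dt for all x ∈ [0,1]. -/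
open Set


noncomputable def taylorP (g : ℝ → ℝ) (n : ℕ) (a x : ℝ) : ℝ :=
  ∑ k ∈ Finset.range (n+1),
    iteratedDerivWithin k g (Icc 0 1) a / (Nat.factorial k) * (x - a) ^ k

lemma taylorP_self (g : ℝ → ℝ) (n : ℕ) (a : ℝ) : taylorP g n a a = g a := by
  unfold taylorP
  rw [Finset.sum_eq_single 0]
  · simp [iteratedDerivWithin_zero]
  · intro k _ hk
    simp [sub_self, zero_pow hk]
  · intro h; simp at h

lemma taylorP_hasDerivAt (g : ℝ → ℝ) (n : ℕ) (a x : ℝ) (ha : a ∈ Icc (0:ℝ) 1) :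
    HasDerivAt (taylorP g (n+1) a)
      (taylorP (derivWithin g (Icc 0 1)) n a x) x := by
  have H : HasDerivAt (fun y => ∑ k ∈ Finset.range (n+2),
      iteratedDerivWithin k g (Icc 0 1) a / (Nat.factorial k) * (y - a) ^ k)
      (∑ k ∈ Finset.range (n+2),
        iteratedDerivWithin k g (Icc 0 1) a / (Nat.factorial k) * ((k:ℝ) * (x - a) ^ (k-1))) x := by
    apply HasDerivAt.fun_sum
    intro k _
    have h1 : HasDerivAt (fun y => (y - a) ^ k) ((k:ℝ) * (x - a) ^ (k-1)) x := by
      have := ((hasDerivAt_id x).sub_const a).fun_pow k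
      simpa using this
    simpa using h1.const_mul (iteratedDerivWithin k g (Icc 0 1) a / (Nat.factorial k))
  have heq : (∑ k ∈ Finset.range (n+2),
        iteratedDerivWithin k g (Icc 0 1) a / (Nat.factorial k) * ((k:ℝ) * (x - a) ^ (k-1)))
      = taylorP (derivWithin g (Icc 0 1)) n a x := by
    rw [Finset.sum_range_succ']
    simp only [Nat.cast_zero, zero_mul, mul_zero, add_zero]
    unfold taylorP
    apply Finset.sum_congr rfl
    intro j _
    rw [← iteratedDerivWithin_succ']
    have hfac : ((Nat.factorial (j+1) : ℝ)) = (j+1) * (Nat.factorial j) := by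
      push_cast [Nat.factorial_succ]; ring
    have hfj : (Nat.factorial j : ℝ) ≠ 0 := Nat.cast_ne_zero.2 (Nat.factorial_ne_zero j)
    have hj1 : ((j:ℝ)+1) ≠ 0 := by positivity
    simp only [Nat.add_sub_cancel]
    rw [hfac]
    push_cast
    field_simp
  rw [← heq]
  exact H

/-- Extension of `g` from `Icc 0 1` to `ℝ` by degree-`n` Taylor polynomials. -/
noncomputable def extF (g : ℝ → ℝ) (n : ℕ) : ℝ → ℝ :=
  fun x => if x < 0 then taylorP g n 0 x else if 1 < x then taylorP g n 1 x else g x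

lemma extF_eqOn (g : ℝ → ℝ) (n : ℕ) : EqOn (extF g n) g (Icc 0 1) := by
  intro x hx
  simp [extF, not_lt.2 hx.1, not_lt.2 hx.2]

lemma taylorP_zero (g : ℝ → ℝ) (a x : ℝ) : taylorP g 0 a x = g a := by
  simp [taylorP]

lemma extF_hasDerivAt (g : ℝ → ℝ) (n : ℕ) (hg : ContDiffOn ℝ (n+1) g (Icc 0 1)) (x : ℝ) :
    HasDerivAt (extF g (n+1)) (extF (derivWithin g (Icc 0 1)) n x) x := by
  set s : Set ℝ := Icc 0 1 with hs
  set g' := derivWithin g s with hg'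
  have hdiff : DifferentiableOn ℝ g s := hg.differentiableOn (by simp)
  have hgw : ∀ z ∈ s, HasDerivWithinAt g (g' z) s z := fun z hz =>
    (hdiff z hz).hasDerivWithinAt
  have h0 : (0:ℝ) ∈ s := by simp [hs]
  have h1 : (1:ℝ) ∈ s := by simp [hs]
  rcases lt_trichotomy x 0 with hx | hx | hx
  · -- x < 0
    have hval : extF g' n x = taylorP g' n 0 x := by simp [extF, hx]
    rw [hval]
    refine (taylorP_hasDerivAt g n 0 x h0).congr_of_eventuallyEq ?_
    filter_upwards [Iio_mem_nhds hx] with y hy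
    simp [extF, mem_Iio.1 hy]
  · -- x = 0
    subst hx
    have hval : extF g' n 0 = g' 0 := extF_eqOn g' n h0
    rw [hval]
    have hL : HasDerivWithinAt (extF g (n+1)) (g' 0) (Iic 0) 0 := by
      have := (taylorP_hasDerivAt g n 0 0 h0).hasDerivWithinAt (s := Iic 0)
      rw [taylorP_self] at this
      refine this.congr ?_ ?_
      · intro y hy
        rcases lt_or_eq_of_le (mem_Iic.1 hy) with h | h
        · simp [extF, h]
        · subst h; rw [extF_eqOn g (n+1) h0, taylorP_self]
      · rw [extF_eqOn g (n+1) h0, taylorP_self]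
    have hR : HasDerivWithinAt (extF g (n+1)) (g' 0) s 0 := by
      refine (hgw 0 h0).congr ?_ ?_
      · intro y hy; exact extF_eqOn g (n+1) hy
      · exact extF_eqOn g (n+1) h0
    have := hL.union hR
    rw [hs, Iic_union_Icc_eq_Iic zero_le_one] at this
    exact this.hasDerivAt (Iic_mem_nhds one_pos)
  · rcases lt_trichotomy x 1 with hx1 | hx1 | hx1
    · -- 0 < x < 1
      have hxs : x ∈ s := ⟨le_of_lt hx, le_of_lt hx1⟩
      have hval : extF g' n x = g' x := extF_eqOn g' n hxs
      rw [hval]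
      have : HasDerivAt g (g' x) x :=
        (hgw x hxs).hasDerivAt (by rw [hs]; exact Icc_mem_nhds hx hx1)
      refine this.congr_of_eventuallyEq ?_
      filter_upwards [Ioo_mem_nhds hx hx1] with y hy
      exact extF_eqOn g (n+1) ⟨le_of_lt hy.1, le_of_lt hy.2⟩
    · -- x = 1
      subst hx1
      have hval : extF g' n 1 = g' 1 := extF_eqOn g' n h1
      rw [hval]
      have hR : HasDerivWithinAt (extF g (n+1)) (g' 1) (Ici 1) 1 := by
        have := (taylorP_hasDerivAt g n 1 1 h1).hasDerivWithinAt (s := Ici 1)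
        rw [taylorP_self] at this
        refine this.congr ?_ ?_
        · intro y hy
          rcases lt_or_eq_of_le (mem_Ici.1 hy) with h | h
          · simp [extF, h, asymm h, not_lt.2 (le_of_lt (lt_trans one_pos h))]
          · rw [← h, extF_eqOn g (n+1) h1, taylorP_self]
        · rw [extF_eqOn g (n+1) h1, taylorP_self]
      have hL : HasDerivWithinAt (extF g (n+1)) (g' 1) s 1 := by
        refine (hgw 1 h1).congr ?_ ?_
        · intro y hy; exact extF_eqOn g (n+1) hy
        · exact extF_eqOn g (n+1) h1
      have := hL.union hR
      rw [hs, Icc_union_Ici_eq_Ici zero_le_one] at this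
      exact this.hasDerivAt (Ici_mem_nhds one_pos)
    · -- 1 < x
      have hval : extF g' n x = taylorP g' n 1 x := by
        simp [extF, hx1, not_lt.2 (le_of_lt (lt_trans one_pos hx1))]
      rw [hval]
      refine (taylorP_hasDerivAt g n 1 x h1).congr_of_eventuallyEq ?_
      filter_upwards [Ioi_mem_nhds hx1] with y hy
      have hy' : 1 < y := mem_Ioi.1 hy
      simp [extF, hy', not_lt.2 (le_of_lt (lt_trans one_pos hy'))]

lemma extF_contDiff : ∀ (n : ℕ) (g : ℝ → ℝ), ContDiffOn ℝ n g (Icc 0 1) →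
    ContDiff ℝ n (extF g n) := by
  intro n
  induction n with
  | zero =>
    intro g hg
    rw [show ((0:ℕ):WithTop ℕ∞) = 0 by norm_cast, contDiff_zero]
    have hfe : extF g 0 = g ∘ (fun x => max 0 (min x 1)) := by
      funext x
      rcases lt_trichotomy x 0 with hx | hx | hx
      · have : min x 1 = x := min_eq_left (le_of_lt (lt_trans hx one_pos))
        simp [extF, hx, this, max_eq_left (le_of_lt hx), taylorP_zero]
      · subst hx; simp [extF]
      · rcases le_or_gt x 1 with hx1 | hx1
        · simp [extF, not_lt.2 (le_of_lt hx), not_lt.2 hx1, min_eq_left hx1,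
            max_eq_right (le_of_lt hx)]
        · simp [extF, not_lt.2 (le_of_lt hx), hx1, min_eq_right (le_of_lt hx1),
            max_eq_right zero_le_one, taylorP_zero]
    rw [hfe]
    have hcl : Continuous (fun x : ℝ => max 0 (min x 1)) :=
      continuous_const.max ((continuous_id).min continuous_const)
    refine hg.continuousOn.comp_continuous hcl ?_
    intro x
    exact ⟨le_max_left _ _, max_le zero_le_one (min_le_right _ _)⟩
  | succ n ih =>
    intro g hg
    have hg' : ContDiffOn ℝ n (derivWithin g (Icc 0 1)) (Icc 0 1) := by
      have := hg.derivWithin (uniqueDiffOn_Icc one_pos) (m := n) (by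
        norm_cast)
      exact this
    have hD := extF_hasDerivAt g n hg
    have hdiff : Differentiable ℝ (extF g (n+1)) := fun x => (hD x).differentiableAt
    have hderiv : deriv (extF g (n+1)) = extF (derivWithin g (Icc 0 1)) n := by
      funext x; exact (hD x).deriv
    rw [show (((n+1:ℕ)):WithTop ℕ∞) = (n:WithTop ℕ∞) + 1 by push_cast; ring]
    rw [contDiff_succ_iff_deriv]
    refine ⟨hdiff, ?_, ?_⟩
    · intro h; exact absurd h (by exact_mod_cast (by simp : (n:WithTop ℕ∞) ≠ ⊤))
    · rw [hderiv]; exact ih _ hg'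

lemma per_t_construction (m : ℕ) (hm : 2 ≤ m) (f F : ℝ → ℝ) (ε : ℝ) (hε : 0 < ε)
    (hF : ContDiff ℝ m F) (hFe : EqOn F f (Icc 0 1))
    (hFpos : ∀ x ∈ Icc (-ε) (1+ε), 0 < deriv F x)
    (t : ℝ) (ht : t ∈ Icc (0:ℝ) 1) :
    ∃ vt : ℝ → ℝ, ContDiff ℝ (m : WithTop ℕ∞) vt ∧ HasCompactSupport vt ∧
      ∀ x ∈ Icc (0:ℝ) 1, vt (t * f x + (1 - t) * x) = f x - x := by
  have hm1 : (1:WithTop ℕ∞) ≤ (m : WithTop ℕ∞) := by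
    exact_mod_cast Nat.one_le_of_lt hm
  set J : Set ℝ := Icc (-ε) (1+ε) with hJ
  have hIccJ : Icc (0:ℝ) 1 ⊆ J := Icc_subset_Icc (by linarith) (by linarith)
  set Φ : ℝ → ℝ := fun x => t * F x + (1-t) * x with hΦdef
  have hΦ : ContDiff ℝ (m : WithTop ℕ∞) Φ :=
    (contDiff_const.mul hF).add (contDiff_const.mul contDiff_id)
  have hΦd : ∀ x, HasDerivAt Φ (t * deriv F x + (1-t)) x := by
    intro x
    have h1 : HasDerivAt F (deriv F x) x :=
      ((hF.differentiable (zero_lt_one.trans_le hm1).ne') x).hasDerivAt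
    have := (h1.const_mul t).add ((hasDerivAt_id x).const_mul (1-t))
    simp only [mul_one] at this
    exact this
  have hΦdpos : ∀ x ∈ J, 0 < t * deriv F x + (1-t) := by
    intro x hx
    rcases eq_or_lt_of_le ht.1 with h | h
    · rw [← h]; norm_num
    · have := hFpos x hx
      have h1 : 0 < t * deriv F x := mul_pos h this
      have h2 : 0 ≤ 1 - t := by linarith [ht.2]
      linarith
  have hmono : StrictMonoOn Φ J := by
    apply strictMonoOn_of_deriv_pos (convex_Icc _ _) hΦ.continuous.continuousOn
    intro x hx
    rw [(hΦd x).deriv]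
    exact hΦdpos x (interior_subset hx)
  have hinj : InjOn Φ J := hmono.injOn
  set ψ : ℝ → ℝ := Function.invFunOn Φ J with hψdef
  have hψl : ∀ z ∈ J, ψ (Φ z) = z := fun z hz => hinj.leftInvOn_invFunOn hz
  -- endpoints
  have hmε : -ε ∈ J := ⟨le_refl _, by linarith⟩
  have h0J : (0:ℝ) ∈ J := hIccJ ⟨le_refl _, zero_le_one⟩
  have h1J : (1:ℝ) ∈ J := hIccJ ⟨zero_le_one, le_refl _⟩
  have h1ε : 1+ε ∈ J := ⟨by linarith, le_refl _⟩
  have hαp : Φ (-ε) < Φ 0 := hmono hmε h0J (by linarith)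
  have hpq : Φ 0 < Φ 1 := hmono h0J h1J one_pos
  have hqβ : Φ 1 < Φ (1+ε) := hmono h1J h1ε (by linarith)
  set α := Φ (-ε) with hαd; set β := Φ (1+ε) with hβd; set p := Φ 0 with hpd; set q := Φ 1 with hqd
  -- smoothness of ψ on Ioo α β
  have hψsmooth : ∀ y ∈ Ioo α β, ContDiffAt ℝ (m : WithTop ℕ∞) ψ y := by
    intro y hy
    obtain ⟨x, hx, hΦx⟩ : y ∈ Φ '' Ioo (-ε) (1+ε) :=
      intermediate_value_Ioo (by linarith) hΦ.continuous.continuousOn hy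
    have hxJ : x ∈ J := Ioo_subset_Icc_self hx
    set d := t * deriv F x + (1-t) with hd
    have hdpos : 0 < d := hΦdpos x hxJ
    set e : ℝ ≃L[ℝ] ℝ := ContinuousLinearEquiv.unitsEquivAut ℝ (Units.mk0 d hdpos.ne') with he
    have hfd : HasFDerivAt Φ (e : ℝ →L[ℝ] ℝ) x := by
      have h1 : (e : ℝ →L[ℝ] ℝ) = ContinuousLinearMap.smulRight (1 : ℝ →L[ℝ] ℝ) d := by
        ext
        simp [he, ContinuousLinearEquiv.unitsEquivAut, mul_comm]
      rw [h1]
      exact (hΦd x).hasFDerivAt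
    have hstrict : HasStrictFDerivAt Φ (e : ℝ →L[ℝ] ℝ) x :=
      hΦ.contDiffAt.hasStrictFDerivAt' hfd (zero_lt_one.trans_le hm1).ne'
    set g : ℝ → ℝ := hstrict.localInverse Φ e x with hgdef
    have hgsmooth : ContDiffAt ℝ (m : WithTop ℕ∞) g (Φ x) :=
      hΦ.contDiffAt.to_localInverse hfd (zero_lt_one.trans_le hm1).ne'
    have hgc : ContinuousAt g (Φ x) := hstrict.localInverse_continuousAt
    have hgx : g (Φ x) = x := hstrict.localInverse_apply_image
    have hev : ψ =ᶠ[nhds (Φ x)] g := by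
      have h1 : ∀ᶠ z in nhds (Φ x), Φ (g z) = z := hstrict.eventually_right_inverse
      have h2 : ∀ᶠ z in nhds (Φ x), g z ∈ Ioo (-ε) (1+ε) := by
        apply hgc.eventually_mem
        rw [hgx]
        exact (isOpen_Ioo).mem_nhds hx
      filter_upwards [h1, h2] with z h1z h2z
      calc ψ z = ψ (Φ (g z)) := by rw [h1z]
        _ = g z := hψl _ (Ioo_subset_Icc_self h2z)
    rw [← hΦx]
    exact hgsmooth.congr_of_eventuallyEq hev
  have hw : ∀ y ∈ Ioo α β, ContDiffAt ℝ (m : WithTop ℕ∞) (fun y => F (ψ y) - ψ y) y := by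
    intro y hy
    exact ((hF.contDiffAt.comp y (hψsmooth y hy)).sub (hψsmooth y hy))
  -- bump function
  clear_value α β p q
  set c := (p + q)/2 with hc
  set δ' := min (p - α) (β - q) with hδ'
  have hδ'pos : 0 < δ' := lt_min (by linarith) (by linarith)
  have h1 : δ' ≤ p - α := min_le_left _ _
  have h2 : δ' ≤ β - q := min_le_right _ _
  clear_value c δ'
  obtain ⟨b, hbIn, hbOut⟩ : ∃ b : ContDiffBump c,
      b.rIn = (q-p)/2 ∧ b.rOut = (q-p)/2 + δ'/2 :=
    ⟨⟨(q-p)/2, (q-p)/2 + δ'/2, by linarith, by linarith⟩, rfl, rfl⟩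
  have hball_in : Metric.closedBall c b.rIn = Icc p q := by
    rw [Real.closedBall_eq_Icc, hbIn]
    have e1 : c - (q-p)/2 = p := by rw [hc]; ring
    have e2 : c + (q-p)/2 = q := by rw [hc]; ring
    rw [e1, e2]
  have hball_out : Metric.closedBall c b.rOut ⊆ Ioo α β := by
    rw [Real.closedBall_eq_Icc, hbOut]
    intro z hz
    have hz1 := hz.1
    have hz2 := hz.2
    rw [hc] at hz1 hz2
    constructor
    · nlinarith
    · nlinarith
  have htsupp : tsupport (b : ℝ → ℝ) ⊆ Ioo α β := by
    rw [b.tsupport_eq]; exact hball_out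
  refine ⟨fun y => b y * (F (ψ y) - ψ y), ?_, ?_, ?_⟩
  · -- smoothness
    rw [contDiff_iff_contDiffAt]
    intro y
    by_cases hy : y ∈ Ioo α β
    · exact (b.contDiff.contDiffAt.mul (hw y hy))
    · have hyn : y ∉ tsupport (b : ℝ → ℝ) := fun h => hy (htsupp h)
      have hopen : IsOpen (tsupport (b : ℝ → ℝ))ᶜ := (isClosed_tsupport _).isOpen_compl
      have hev0 : (fun y => (b : ℝ → ℝ) y * (F (ψ y) - ψ y)) =ᶠ[nhds y] (fun _ => (0:ℝ)) := by
        filter_upwards [hopen.mem_nhds hyn] with z hz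
        rw [image_eq_zero_of_notMem_tsupport hz, zero_mul]
      exact (contDiffAt_const (c := (0:ℝ))).congr_of_eventuallyEq hev0
  · -- compact support
    exact (b.hasCompactSupport).mul_right
  · -- value
    intro x hx
    have hxJ : x ∈ J := hIccJ hx
    have hΦx : Φ x = t * f x + (1-t) * x := by rw [hΦdef]; simp [hFe hx]
    have hmem : Φ x ∈ Metric.closedBall c b.rIn := by
      rw [hball_in, hpd, hqd]
      exact ⟨(hmono.monotoneOn) h0J hxJ hx.1, (hmono.monotoneOn) hxJ h1J hx.2⟩
    rw [← hΦx]
    show (b : ℝ → ℝ) (Φ x) * (F (ψ (Φ x)) - ψ (Φ x)) = f x - x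
    rw [b.one_of_mem_closedBall hmem, hψl x hxJ, hFe hx, one_mul]

/-- Representation of a smooth strictly increasing function as the time-one
solution of an ODE: if `f` is `Cᵐ` on `[0,1]` (`m ≥ 2`) with `f' > 0`, then
there is a time-dependent vector field `v`, with `v t` of class `C^{m−1}` and
compactly supported, such that `v(t, t·f(x) + (1−t)·x) = f(x) − x`, and the
linear interpolation path `φ_t(x) = t·f(x) + (1−t)·x` solves
`φ_t(x) = x + ∫₀ᵗ v(s, φ_s(x)) ds`; in particular `f(x) = φ₁(x)`. -/
theorem monotone_function_as_ode_flow
    (m : ℕ) (hm : 2 ≤ m) (f : ℝ → ℝ)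
    (hf : ContDiffOn ℝ m f (Icc 0 1))
    (hf' : ∀ x ∈ Icc (0:ℝ) 1, 0 < derivWithin f (Icc 0 1) x) :
    ∃ v : ℝ → ℝ → ℝ,
      (∀ t ∈ Icc (0:ℝ) 1,
        ContDiff ℝ ((m - 1 : ℕ) : ℕ∞) (v t) ∧ HasCompactSupport (v t)) ∧
      (∀ t ∈ Icc (0:ℝ) 1, ∀ x ∈ Icc (0:ℝ) 1,
        v t (t * f x + (1 - t) * x) = f x - x) ∧
      (∀ t ∈ Icc (0:ℝ) 1, ∀ x ∈ Icc (0:ℝ) 1,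
        t * f x + (1 - t) * x = x + ∫ s in (0:ℝ)..t, v s (s * f x + (1 - s) * x)) ∧
      (∀ x ∈ Icc (0:ℝ) 1, f x = x + ∫ t in (0:ℝ)..1, v t (t * f x + (1 - t) * x)) := by
  -- the global extension
  set F := extF f m with hFdef
  have hF : ContDiff ℝ m F := extF_contDiff m f hf
  have hFe : EqOn F f (Icc 0 1) := extF_eqOn f m
  -- derivative positivity on a slightly larger interval
  have hmder : ∀ x, HasDerivAt F (extF (derivWithin f (Icc 0 1)) (m-1) x) x := by
    have hmpos : 0 < m := lt_of_lt_of_le two_pos hm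
    have hm' : m - 1 + 1 = m := Nat.succ_pred_eq_of_pos hmpos
    have hcast : (((m-1:ℕ)) : WithTop ℕ∞) + 1 = ((m:ℕ) : WithTop ℕ∞) := by
      exact_mod_cast congrArg (Nat.cast : ℕ → WithTop ℕ∞) hm'
    intro x
    have := extF_hasDerivAt f (m-1) (by rw [hcast]; exact hf) x
    rw [hm'] at this
    exact this
  have hderiv : ∀ x, deriv F x = extF (derivWithin f (Icc 0 1)) (m-1) x :=
    fun x => (hmder x).deriv
  have hpos01 : ∀ x ∈ Icc (0:ℝ) 1, 0 < deriv F x := by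
    intro x hx
    rw [hderiv x, extF_eqOn _ _ hx]
    exact hf' x hx
  have hderivC : Continuous (deriv F) :=
    hF.continuous_deriv (by exact_mod_cast Nat.one_le_of_lt hm)
  -- choose ε
  obtain ⟨δ, hδpos, hδ⟩ : ∃ δ, 0 < δ ∧
      Metric.thickening δ (Icc (0:ℝ) 1) ⊆ {x | 0 < deriv F x} :=
    isCompact_Icc.exists_thickening_subset_open
      (isOpen_lt continuous_const hderivC) (fun x hx => hpos01 x hx)
  set ε := δ/2 with hε
  have hεpos : 0 < ε := by positivity
  have hFpos : ∀ x ∈ Icc (-ε) (1+ε), 0 < deriv F x := by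
    intro x hx
    apply hδ
    rw [Metric.mem_thickening_iff]
    refine ⟨max 0 (min x 1), ⟨le_max_left _ _, max_le zero_le_one (min_le_right _ _)⟩, ?_⟩
    rw [Real.dist_eq]
    have h1 := hx.1; have h2 := hx.2
    rcases lt_trichotomy x 0 with h | h | h
    · rw [min_eq_left (by linarith), max_eq_left (le_of_lt h)]
      rw [abs_of_nonpos (by linarith)]
      linarith
    · subst h; simp [abs_of_nonpos]; linarith
    · rcases le_or_gt x 1 with h3 | h3
      · rw [min_eq_left h3, max_eq_right (le_of_lt h)]
        simp [abs_of_nonneg]; linarith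
      · rw [min_eq_right (le_of_lt h3), max_eq_right zero_le_one]
        rw [abs_of_nonneg (by linarith)]
        linarith
  -- per-t choice
  have H : ∀ t ∈ Icc (0:ℝ) 1, ∃ vt : ℝ → ℝ,
      ContDiff ℝ (m : WithTop ℕ∞) vt ∧ HasCompactSupport vt ∧
      ∀ x ∈ Icc (0:ℝ) 1, vt (t * f x + (1 - t) * x) = f x - x :=
    fun t ht => per_t_construction m hm f F ε hεpos hF hFe hFpos t ht
  set v : ℝ → ℝ → ℝ := fun t =>
    if h : t ∈ Icc (0:ℝ) 1 then (H t h).choose else fun _ => 0 with hv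
  have hvspec : ∀ t (ht : t ∈ Icc (0:ℝ) 1),
      ContDiff ℝ (m : WithTop ℕ∞) (v t) ∧ HasCompactSupport (v t) ∧
      ∀ x ∈ Icc (0:ℝ) 1, v t (t * f x + (1 - t) * x) = f x - x := by
    intro t ht
    rw [hv]; simp only [dif_pos ht]
    exact (H t ht).choose_spec
  have hle : ((((m-1:ℕ)):ℕ∞) : WithTop ℕ∞) ≤ (m : WithTop ℕ∞) := by
    exact_mod_cast Nat.sub_le m 1
  refine ⟨v, ?_, ?_, ?_, ?_⟩
  · exact fun t ht => ⟨((hvspec t ht).1).of_le hle, (hvspec t ht).2.1⟩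
  · exact fun t ht => (hvspec t ht).2.2
  · intro t ht x hx
    have hval : EqOn (fun s => v s (s * f x + (1 - s) * x)) (fun _ => f x - x)
        (uIcc 0 t) := by
      intro s hs
      rw [uIcc_of_le ht.1] at hs
      have hs' : s ∈ Icc (0:ℝ) 1 := ⟨hs.1, le_trans hs.2 ht.2⟩
      exact (hvspec s hs').2.2 x hx
    rw [intervalIntegral.integral_congr hval, intervalIntegral.integral_const]
    simp only [sub_zero, smul_eq_mul]
    ring
  · intro x hx
    have h1 : (1:ℝ) ∈ Icc (0:ℝ) 1 := ⟨zero_le_one, le_refl _⟩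
    have hval : EqOn (fun s => v s (s * f x + (1 - s) * x)) (fun _ => f x - x)
        (uIcc 0 1) := by
      intro s hs
      rw [uIcc_of_le zero_le_one] at hs
      exact (hvspec s hs).2.2 x hx
    rw [intervalIntegral.integral_congr hval, intervalIntegral.integral_const]
    simp only [sub_zero, smul_eq_mul]
    ring
end

section
/- Let H be a Hilbert space of real-valued functions on ℝ with inner product ⟨·,·⟩ and norm ‖·‖_K, admitting a reproducing kernel K : ℝ × ℝ → ℝ. Let n > 2, let X₁, …, Xₙ be distinct real numbers such that the n × 2 matrix T with rows (1, X_i) has full rank 2, let Y ∈ ℝⁿ, and let λ > 0. Let Σ be the n × n matrix with entries Σ[i,j] = K(X_i, X_j), assumed positive semidefinite, let Σ_λ = Σ + nλ·I_n (which is invertible), and let P = T(Tᵀ Σ_λ⁻¹ T)⁻¹ Tᵀ Σ_λ⁻¹. Then the unique minimizer of (1/n)·Σ_{i=1}^n (Y_i − a₁ − a₂·X_i − h(X_i))² + λ·‖h‖_K² over (a₁, a₂, h) ∈ ℝ × ℝ × H is given by v(x) = α₁ + α₂·x + Σ_{i=1}^n β_i K(x, X_i) with coefficient vectors β = Σ_λ⁻¹(I_n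 − P)Y and α = (Tᵀ Σ_λ⁻¹ T)⁻¹ Tᵀ Σ_λ⁻¹ Y; consequently the vector of fitted values (v(X₁), …, v(Xₙ))ᵀ equals A_λ Y where A_λ = P + Σ Σ_λ⁻¹ (I_n − P). -/
open Matrix

/-- The penalized least-squares criterion of the general spline smoothing
problem with parametric part `span{1, x}`. -/
noncomputable def splineObjective' {H : Type*} [NormedAddCommGroup H]
    [InnerProductSpace ℝ H] (ev : H →ₗ[ℝ] (ℝ → ℝ)) {n : ℕ}
    (x y : Fin n → ℝ) (lam : ℝ) (p : ℝ × ℝ × H) : ℝ :=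
  (1 / n) * ∑ i, (y i - p.1 - p.2.1 * x i - ev p.2.2 (x i)) ^ 2 +
    lam * ‖p.2.2‖ ^ 2

/-- Closed-form coefficient formulas for the smoothing spline: with kernel
matrix `Σ[i,j] = K(Xᵢ,Xⱼ)`, design matrix `T` with rows `(1, Xᵢ)` of full rank,
`Σ_λ = Σ + nλI` (invertible) and `P = T(TᵀΣ_λ⁻¹T)⁻¹TᵀΣ_λ⁻¹`, the unique
minimizer of the penalized criterion is
`v(x) = α₁ + α₂x + ∑ᵢ βᵢ K(x,Xᵢ)` with `β = Σ_λ⁻¹(I − P)Y` and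
`α = (TᵀΣ_λ⁻¹T)⁻¹TᵀΣ_λ⁻¹Y`, and the fitted values are `A_λY` with
`A_λ = P + ΣΣ_λ⁻¹(I − P)`. -/
theorem smoothing_spline_closed_form
    {H : Type*} [NormedAddCommGroup H] [InnerProductSpace ℝ H] [CompleteSpace H]
    (ev : H →ₗ[ℝ] (ℝ → ℝ)) (k : ℝ → H)
    (hrepr : ∀ (x : ℝ) (h : H), (inner ℝ (k x) h : ℝ) = ev h x)
    (n : ℕ) (hn : 2 < n) (X : Fin n → ℝ) (hX : Function.Injective X)
    (Y : Fin n → ℝ) (lam : ℝ) (hlam : 0 < lam)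
    (T : Matrix (Fin n) (Fin 2) ℝ) (hT : ∀ i, T i 0 = 1 ∧ T i 1 = X i)
    (hTrank : T.rank = 2)
    (Sg : Matrix (Fin n) (Fin n) ℝ) (hSg : ∀ i j, Sg i j = ev (k (X j)) (X i))
    (hpsd : Sg.PosSemidef)
    (Sgl : Matrix (Fin n) (Fin n) ℝ) (hSgl : Sgl = Sg + ((n : ℝ) * lam) • 1)
    (P : Matrix (Fin n) (Fin n) ℝ) (hP : P = T * (Tᵀ * Sgl⁻¹ * T)⁻¹ * Tᵀ * Sgl⁻¹)
    (β : Fin n → ℝ) (hβ : β = Sgl⁻¹ *ᵥ ((1 - P) *ᵥ Y))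
    (α : Fin 2 → ℝ) (hα : α = (Tᵀ * Sgl⁻¹ * T)⁻¹ *ᵥ (Tᵀ *ᵥ (Sgl⁻¹ *ᵥ Y)))
    (A : Matrix (Fin n) (Fin n) ℝ) (hA : A = P + Sg * Sgl⁻¹ * (1 - P)) :
    IsUnit Sgl.det ∧
    (∀ q : ℝ × ℝ × H,
      splineObjective' ev X Y lam (α 0, α 1, ∑ i, β i • k (X i)) ≤
        splineObjective' ev X Y lam q) ∧
    (∀ p : ℝ × ℝ × H,
      (∀ q : ℝ × ℝ × H,
        splineObjective' ev X Y lam p ≤ splineObjective' ev X Y lam q) →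
      p = (α 0, α 1, ∑ i, β i • k (X i))) ∧
    ∀ i : Fin n,
      α 0 + α 1 * X i + ev (∑ j, β j • k (X j)) (X i) = (A *ᵥ Y) i := by
  have hnR : (0:ℝ) < n := by exact_mod_cast (by omega : 0 < n)
  have hnl : 0 < (n:ℝ) * lam := mul_pos hnR hlam
  -- Sgl is positive definite, hence invertible
  have hone : (((n:ℝ)*lam) • (1 : Matrix (Fin n) (Fin n) ℝ)).PosDef := by
    rw [Matrix.smul_one_eq_diagonal]
    exact Matrix.posDef_diagonal_iff.2 fun i => hnl
  have hSglPD : Sgl.PosDef := by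
    rw [hSgl]; exact Matrix.PosDef.posSemidef_add hpsd hone
  have hSglu : IsUnit Sgl.det := hSglPD.det_pos.ne'.isUnit
  have hinv1 : Sgl * Sgl⁻¹ = 1 := Matrix.mul_nonsing_inv _ hSglu
  have hSglInvPD : Sgl⁻¹.PosDef := hSglPD.inv
  -- T has injective mulVec
  have hTinj : Function.Injective T.mulVec := by
    have h1 : Module.finrank ℝ (LinearMap.range T.mulVecLin)
        + Module.finrank ℝ (LinearMap.ker T.mulVecLin)
        = Module.finrank ℝ (Fin 2 → ℝ) :=
      LinearMap.finrank_range_add_finrank_ker T.mulVecLin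
    have h2 : Module.finrank ℝ (LinearMap.range T.mulVecLin) = 2 := hTrank
    have h3 : Module.finrank ℝ (Fin 2 → ℝ) = 2 := Module.finrank_fin_fun ℝ
    have h4 : Module.finrank ℝ (LinearMap.ker T.mulVecLin) = 0 := by omega
    have h5 : LinearMap.ker T.mulVecLin = ⊥ := Submodule.finrank_eq_zero.mp h4
    exact LinearMap.ker_eq_bot.mp h5
  -- M = TᵀSgl⁻¹T is positive definite, hence invertible
  have hMPD : (Tᵀ * Sgl⁻¹ * T).PosDef := by
    refine Matrix.PosDef.of_dotProduct_mulVec_pos ?_ ?_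
    · have hsym : Sgl⁻¹ᵀ = Sgl⁻¹ := by
        rw [← Matrix.conjTranspose_eq_transpose_of_trivial]
        exact hSglInvPD.isHermitian.eq
      show (Tᵀ * Sgl⁻¹ * T)ᴴ = _
      simp [Matrix.conjTranspose_mul, Matrix.mul_assoc, hsym]
    · intro x hx
      have hTx : T *ᵥ x ≠ 0 := by
        intro h0
        exact hx (hTinj (by simp [h0]))
      have hq := hSglInvPD.dotProduct_mulVec_pos hTx
      have e : dotProduct (star x) ((Tᵀ * Sgl⁻¹ * T) *ᵥ x)
          = dotProduct (star (T *ᵥ x)) (Sgl⁻¹ *ᵥ (T *ᵥ x)) := by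
        simp only [star_trivial, Matrix.mul_assoc, ← Matrix.mulVec_mulVec]
        rw [Matrix.dotProduct_mulVec x, Matrix.vecMul_transpose]
      rw [e]
      exact hq
  have hMu : IsUnit (Tᵀ * Sgl⁻¹ * T).det := hMPD.det_pos.ne'.isUnit
  have hMinv : (Tᵀ * Sgl⁻¹ * T) * (Tᵀ * Sgl⁻¹ * T)⁻¹ = 1 := Matrix.mul_nonsing_inv _ hMu
  -- T *ᵥ α = P *ᵥ Y
  have hTα : T *ᵥ α = P *ᵥ Y := by
    rw [hα, hP]
    simp [Matrix.mulVec_mulVec, Matrix.mul_assoc]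
  -- Tᵀ *ᵥ β = 0
  have hmat : Tᵀ * Sgl⁻¹ * (1 - P) = 0 := by
    rw [hP, Matrix.mul_sub, Matrix.mul_one]
    have e1 : Tᵀ * Sgl⁻¹ * (T * (Tᵀ * Sgl⁻¹ * T)⁻¹ * Tᵀ * Sgl⁻¹)
        = ((Tᵀ * Sgl⁻¹ * T) * (Tᵀ * Sgl⁻¹ * T)⁻¹) * (Tᵀ * Sgl⁻¹) := by
      simp only [Matrix.mul_assoc]
    rw [e1, hMinv, Matrix.one_mul, sub_self]
  have hTb : Tᵀ *ᵥ β = 0 := by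
    rw [hβ, Matrix.mulVec_mulVec, Matrix.mulVec_mulVec, hmat, Matrix.zero_mulVec]
  -- residual identity
  have hSgβ : Sg *ᵥ β = (1 - P) *ᵥ Y - ((n:ℝ)*lam) • β := by
    have h1 : Sgl *ᵥ β = (1 - P) *ᵥ Y := by
      rw [hβ, Matrix.mulVec_mulVec, hinv1, Matrix.one_mulVec]
    have h2 : Sg = Sgl - ((n:ℝ)*lam) • 1 := by rw [hSgl]; abel
    rw [h2, Matrix.sub_mulVec, h1, Matrix.smul_mulVec, Matrix.one_mulVec]
  have hTα' : ∀ i, (T *ᵥ α) i = α 0 + α 1 * X i := by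
    intro i
    simp only [Matrix.mulVec, dotProduct, Fin.sum_univ_two, (hT i).1, (hT i).2]
    ring
  set h0 : H := ∑ i, β i • k (X i) with hh0
  have hevh0X : ∀ i, ev h0 (X i) = (Sg *ᵥ β) i := by
    intro i
    rw [hh0]
    simp only [map_sum, _root_.map_smul, Finset.sum_apply, Pi.smul_apply, smul_eq_mul,
      Matrix.mulVec, dotProduct]
    exact Finset.sum_congr rfl fun j _ => by rw [hSg i j]; ring
  have hres : ∀ i, Y i - α 0 - α 1 * X i - ev h0 (X i) = ((n:ℝ)*lam) * β i := by
    intro i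
    have h3 := congrFun hSgβ i
    have h4 := congrFun hTα i
    rw [hTα' i] at h4
    simp only [Pi.sub_apply, Pi.smul_apply, smul_eq_mul, Matrix.sub_mulVec,
      Matrix.one_mulVec] at h3
    rw [hevh0X i, h3, ← h4]
    ring
  -- inner products with h0
  have hinner : ∀ w : H, (inner ℝ h0 w : ℝ) = ∑ j, β j * ev w (X j) := by
    intro w
    rw [hh0, sum_inner]
    exact Finset.sum_congr rfl fun j _ => by
      rw [real_inner_smul_left, hrepr]
  -- sums of β vanish against columns of T
  have hb0 : ∑ j, β j = 0 := by
    have h1 := congrFun hTb 0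
    simpa [Matrix.mulVec, dotProduct, Matrix.transpose_apply,
      fun i => (hT i).1] using h1
  have hb1 : ∑ j, β j * X j = 0 := by
    have h1 := congrFun hTb 1
    simp only [Matrix.mulVec, dotProduct, Matrix.transpose_apply, Pi.zero_apply] at h1
    rw [← h1]
    exact Finset.sum_congr rfl fun j _ => by rw [(hT j).2]; ring
  -- the key identity
  have key : ∀ q : ℝ × ℝ × H, splineObjective' ev X Y lam q
      = splineObjective' ev X Y lam (α 0, α 1, h0)
        + ((1/(n:ℝ)) * ∑ i, ((q.1 - α 0) + (q.2.1 - α 1) * X i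
            + ev (q.2.2 - h0) (X i)) ^ 2 + lam * ‖q.2.2 - h0‖ ^ 2) := by
    rintro ⟨a, b, h⟩
    simp only [splineObjective']
    have hu : ∀ i, Y i - a - b * X i - ev h (X i)
        = ((n:ℝ)*lam) * β i - ((a - α 0) + (b - α 1) * X i + ev (h - h0) (X i)) := by
      intro i
      have h1 := hres i
      have h2 : ev (h - h0) (X i) = ev h (X i) - ev h0 (X i) := by
        rw [map_sub]; rfl
      rw [h2]
      linarith [h1]
    have e2 : ∑ i, 2 * (((n:ℝ)*lam) * β i) * ((a - α 0) + (b - α 1) * X i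
        + ev (h - h0) (X i)) = 2 * ((n:ℝ)*lam) * (inner ℝ h0 (h - h0) : ℝ) := by
      have e3 : ∀ i : Fin n, 2 * (((n:ℝ)*lam) * β i) * ((a - α 0) + (b - α 1) * X i
          + ev (h - h0) (X i))
          = 2 * ((n:ℝ)*lam) * ((a - α 0) * β i)
            + (2 * ((n:ℝ)*lam) * ((b - α 1) * (β i * X i))
            + 2 * ((n:ℝ)*lam) * (β i * ev (h - h0) (X i))) := fun i => by ring
      rw [Finset.sum_congr rfl fun i _ => e3 i, Finset.sum_add_distrib,
        Finset.sum_add_distrib]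
      have s1 : ∑ i, 2 * ((n:ℝ)*lam) * ((a - α 0) * β i)
          = 2 * ((n:ℝ)*lam) * (a - α 0) * ∑ i, β i := by
        rw [Finset.mul_sum]
        exact Finset.sum_congr rfl fun i _ => by ring
      have s2 : ∑ i, 2 * ((n:ℝ)*lam) * ((b - α 1) * (β i * X i))
          = 2 * ((n:ℝ)*lam) * (b - α 1) * ∑ i, β i * X i := by
        rw [Finset.mul_sum]
        exact Finset.sum_congr rfl fun i _ => by ring
      have s3 : ∑ i, 2 * ((n:ℝ)*lam) * (β i * ev (h - h0) (X i))
          = 2 * ((n:ℝ)*lam) * ∑ i, β i * ev (h - h0) (X i) := by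
        rw [Finset.mul_sum]
      rw [s1, s2, s3, hb0, hb1, ← hinner (h - h0)]
      ring
    have hsum : ∑ i, (Y i - a - b * X i - ev h (X i)) ^ 2
        = ∑ i, (((n:ℝ)*lam) * β i) ^ 2
          - 2 * ((n:ℝ)*lam) * (inner ℝ h0 (h - h0) : ℝ)
          + ∑ i, ((a - α 0) + (b - α 1) * X i + ev (h - h0) (X i)) ^ 2 := by
      have e1 : ∀ i : Fin n, (Y i - a - b * X i - ev h (X i)) ^ 2
          = (((n:ℝ)*lam) * β i) ^ 2
            - 2 * (((n:ℝ)*lam) * β i) * ((a - α 0) + (b - α 1) * X i + ev (h - h0) (X i))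
            + ((a - α 0) + (b - α 1) * X i + ev (h - h0) (X i)) ^ 2 := by
        intro i
        rw [hu i]; ring
      rw [Finset.sum_congr rfl fun i _ => e1 i, Finset.sum_add_distrib,
        Finset.sum_sub_distrib, e2]
    have hn2 : ∑ i, (Y i - α 0 - α 1 * X i - ev h0 (X i)) ^ 2
        = ∑ i, (((n:ℝ)*lam) * β i) ^ 2 :=
      Finset.sum_congr rfl fun i _ => by rw [hres i]
    have hnormh : ‖h‖ ^ 2 = ‖h0‖ ^ 2 + 2 * (inner ℝ h0 (h - h0) : ℝ) + ‖h - h0‖ ^ 2 := by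
      have e := norm_add_sq_real h0 (h - h0)
      rw [add_sub_cancel] at e
      exact e
    rw [hsum, hn2, hnormh]
    have hne : (n:ℝ) ≠ 0 := hnR.ne'
    field_simp
    ring
  have hnonneg : ∀ q : ℝ × ℝ × H,
      0 ≤ (1/(n:ℝ)) * ∑ i, ((q.1 - α 0) + (q.2.1 - α 1) * X i
          + ev (q.2.2 - h0) (X i)) ^ 2 + lam * ‖q.2.2 - h0‖ ^ 2 := by
    intro q
    have h1 : 0 ≤ ∑ i, ((q.1 - α 0) + (q.2.1 - α 1) * X i
        + ev (q.2.2 - h0) (X i)) ^ 2 := Finset.sum_nonneg fun i _ => sq_nonneg _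
    have h2 : 0 ≤ (1/(n:ℝ)) := by positivity
    nlinarith [sq_nonneg ‖q.2.2 - h0‖, hlam.le, mul_nonneg h2 h1,
      mul_nonneg hlam.le (sq_nonneg ‖q.2.2 - h0‖)]
  refine ⟨hSglu, ?_, ?_, ?_⟩
  · intro q
    have := key q
    have := hnonneg q
    linarith
  · rintro ⟨a, b, h⟩ hmin
    have h1 := hmin (α 0, α 1, h0)
    have h2 : splineObjective' ev X Y lam (α 0, α 1, h0)
        ≤ splineObjective' ev X Y lam (a, b, h) := by
      have := key (a, b, h); have := hnonneg (a, b, h); linarith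
    have heq : splineObjective' ev X Y lam (a, b, h)
        = splineObjective' ev X Y lam (α 0, α 1, h0) := le_antisymm h1 h2
    have hk := key (a, b, h)
    rw [heq] at hk
    have hz : (1/(n:ℝ)) * ∑ i, ((a - α 0) + (b - α 1) * X i
        + ev (h - h0) (X i)) ^ 2 + lam * ‖h - h0‖ ^ 2 = 0 := by linarith
    have hs1 : 0 ≤ ∑ i, ((a - α 0) + (b - α 1) * X i + ev (h - h0) (X i)) ^ 2 :=
      Finset.sum_nonneg fun i _ => sq_nonneg _
    have hinvn : 0 < (1/(n:ℝ)) := by positivity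
    have hA1 : 0 ≤ (1/(n:ℝ)) * ∑ i, ((a - α 0) + (b - α 1) * X i
        + ev (h - h0) (X i)) ^ 2 := mul_nonneg hinvn.le hs1
    have hB1 : 0 ≤ lam * ‖h - h0‖ ^ 2 := mul_nonneg hlam.le (sq_nonneg _)
    have hB0 : lam * ‖h - h0‖ ^ 2 = 0 := by linarith
    have hnorm0 : ‖h - h0‖ ^ 2 = 0 := by
      rcases mul_eq_zero.mp hB0 with hc | hc
      · exact absurd hc hlam.ne'
      · exact hc
    have hh : h = h0 := by
      have h5 : ‖h - h0‖ = 0 := pow_eq_zero_iff (two_ne_zero) |>.mp hnorm0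
      rw [norm_eq_zero, sub_eq_zero] at h5
      exact h5
    have hA0 : (1/(n:ℝ)) * ∑ i, ((a - α 0) + (b - α 1) * X i
        + ev (h - h0) (X i)) ^ 2 = 0 := by linarith
    have hsum0 : ∑ i, ((a - α 0) + (b - α 1) * X i + ev (h - h0) (X i)) ^ 2 = 0 := by
      rcases mul_eq_zero.mp hA0 with hc | hc
      · exact absurd hc hinvn.ne'
      · exact hc
    have hterm : ∀ i ∈ Finset.univ, ((a - α 0) + (b - α 1) * X i
        + ev (h - h0) (X i)) ^ 2 = 0 :=
      (Finset.sum_eq_zero_iff_of_nonneg fun i _ => sq_nonneg _).mp hsum0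
    have hterm' : ∀ i : Fin n, (a - α 0) + (b - α 1) * X i = 0 := by
      intro i
      have h6 := hterm i (Finset.mem_univ i)
      rw [hh] at h6
      simp only [sub_self, map_zero, Pi.zero_apply, add_zero] at h6
      exact pow_eq_zero_iff (two_ne_zero) |>.mp h6
    have i0 : Fin n := ⟨0, by omega⟩
    have i1 : Fin n := ⟨1, by omega⟩
    have hXne : X ⟨0, by omega⟩ ≠ X ⟨1, by omega⟩ := by
      intro he
      have := hX he
      simp [Fin.ext_iff] at this
    have e0 := hterm' ⟨0, by omega⟩
    have e1 := hterm' ⟨1, by omega⟩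
    have hb : b = α 1 := by
      by_contra hbne
      have : X ⟨0, by omega⟩ = X ⟨1, by omega⟩ := by
        have hsub : (b - α 1) * (X ⟨0, by omega⟩ - X ⟨1, by omega⟩) = 0 := by linarith
        rcases mul_eq_zero.mp hsub with h | h
        · exact absurd (by linarith : b = α 1) hbne
        · linarith
      exact hXne this
    have ha : a = α 0 := by
      have := hterm' ⟨0, by omega⟩
      rw [hb] at this
      linarith [this]
    rw [ha, hb, hh]
  · intro i
    have h1 : ev h0 (X i) = (Sg *ᵥ β) i := hevh0X i
    rw [h1, hA, Matrix.add_mulVec]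
    have h2 : (Sg * Sgl⁻¹ * (1 - P)) *ᵥ Y = Sg *ᵥ β := by
      rw [hβ]
      simp [Matrix.mulVec_mulVec, Matrix.mul_assoc]
    rw [h2]
    have h3 := hTα' i
    rw [hTα] at h3
    simp only [Pi.add_apply]
    rw [← h3]
end

section
/- Let n > 2 and λ > 0. Let Σ be an n × n symmetric positive semidefinite real matrix, let T be an n × 2 real matrix of full column rank, let Σ_λ = Σ + nλ·I_n, let P = T(Tᵀ Σ_λ⁻¹ T)⁻¹ Tᵀ Σ_λ⁻¹, and let A_λ = P + Σ Σ_λ⁻¹ (I_n − P). Then for every x ∈ ℝⁿ, ‖A_λ x‖₂ ≤ 2‖x‖₂, where ‖·‖₂ denotes the Euclidean norm on ℝⁿ. -/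
open Matrix

private lemma dp_shift {n : ℕ} (B C : Matrix (Fin n) (Fin n) ℝ) (z : Fin n → ℝ) :
    (B *ᵥ z) ⬝ᵥ (C *ᵥ z) = z ⬝ᵥ ((Bᵀ * C) *ᵥ z) := by
  rw [← mulVec_mulVec]
  conv_rhs => rw [dotProduct_mulVec, vecMul_transpose]

private lemma dp_self_nonneg {n : ℕ} (v : Fin n → ℝ) : 0 ≤ v ⬝ᵥ v :=
  Finset.sum_nonneg fun i _ => mul_self_nonneg _

/-- Spectral bound on the smoothing-spline influence matrix: with `Σ` symmetric
positive semidefinite, `T` of full column rank `2`, `Σ_λ = Σ + nλI`,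
`P = T(TᵀΣ_λ⁻¹T)⁻¹TᵀΣ_λ⁻¹` and `A_λ = P + ΣΣ_λ⁻¹(I − P)`, the Euclidean
operator norm of `A_λ` is at most `2`. -/
theorem influence_matrix_bound
    (n : ℕ) (hn : 2 < n) (lam : ℝ) (hlam : 0 < lam)
    (Sg : Matrix (Fin n) (Fin n) ℝ) (hpsd : Sg.PosSemidef)
    (T : Matrix (Fin n) (Fin 2) ℝ) (hTrank : T.rank = 2)
    (Sgl : Matrix (Fin n) (Fin n) ℝ) (hSgl : Sgl = Sg + ((n : ℝ) * lam) • 1)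
    (P : Matrix (Fin n) (Fin n) ℝ) (hP : P = T * (Tᵀ * Sgl⁻¹ * T)⁻¹ * Tᵀ * Sgl⁻¹)
    (A : Matrix (Fin n) (Fin n) ℝ) (hA : A = P + Sg * Sgl⁻¹ * (1 - P)) :
    ∀ x : Fin n → ℝ,
      Real.sqrt (∑ i, ((A *ᵥ x) i) ^ 2) ≤ 2 * Real.sqrt (∑ i, (x i) ^ 2) := by
  intro x
  set c : ℝ := (n : ℝ) * lam with hc
  have hcpos : (0 : ℝ) < c := by
    have : (0 : ℝ) < (n : ℝ) := by exact_mod_cast Nat.zero_lt_of_lt hn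
    exact mul_pos this hlam
  -- Sgl is positive definite
  have hSglPD : Sgl.PosDef := by
    rw [hSgl]
    refine Matrix.PosDef.posSemidef_add hpsd ?_
    rw [smul_one_eq_diagonal]
    exact posDef_diagonal_iff.mpr fun _ => hcpos
  have hSgldet : IsUnit Sgl.det := hSglPD.det_pos.ne'.isUnit
  have hSiPD : Sgl⁻¹.PosDef := hSglPD.inv
  -- square root of Sgl⁻¹
  set B : Matrix (Fin n) (Fin n) ℝ := (open scoped MatrixOrder in CFC.sqrt Sgl⁻¹) with hBdef
  have hBB : B * B = Sgl⁻¹ := by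
    open scoped MatrixOrder in exact CFC.sqrt_mul_sqrt_self _ hSiPD.posSemidef.nonneg
  have hBt : Bᵀ = B := by
    rw [← conjTranspose_eq_transpose_of_trivial]
    open scoped MatrixOrder in exact (Matrix.nonneg_iff_posSemidef.mp (CFC.sqrt_nonneg Sgl⁻¹)).1
  have hBdet : IsUnit B.det := by
    have h1 : B.det * B.det = Sgl⁻¹.det := by rw [← det_mul, hBB]
    have h2 : Sgl⁻¹.det ≠ 0 := hSiPD.det_pos.ne'
    refine isUnit_iff_ne_zero.mpr fun h => ?_
    rw [h, zero_mul] at h1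
    exact h2 h1.symm
  have hSglEq : Sgl = B⁻¹ * B⁻¹ := by
    rw [← Matrix.nonsing_inv_nonsing_inv Sgl hSgldet, ← hBB, Matrix.mul_inv_rev]
  have hBSB : B * Sgl * B = 1 := by
    rw [hSglEq, ← Matrix.mul_assoc, Matrix.mul_nonsing_inv B hBdet, Matrix.one_mul,
      Matrix.nonsing_inv_mul B hBdet]
  -- key1 : the B-contraction
  have key1 : ∀ z : Fin n → ℝ, c * ((B *ᵥ z) ⬝ᵥ (B *ᵥ z)) ≤ z ⬝ᵥ z := by
    intro z
    set y : Fin n → ℝ := B *ᵥ z with hy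
    have h0 : 0 ≤ y ⬝ᵥ (Sg *ᵥ y) := by simpa using hpsd.dotProduct_mulVec_nonneg y
    have h2 : y ⬝ᵥ (Sgl *ᵥ y) = y ⬝ᵥ (Sg *ᵥ y) + c * (y ⬝ᵥ y) := by
      rw [hSgl, add_mulVec, dotProduct_add, smul_mulVec, one_mulVec, dotProduct_smul]
      simp [hc]
    have h3 : y ⬝ᵥ (Sgl *ᵥ y) = z ⬝ᵥ z := by
      rw [hy, mulVec_mulVec, dp_shift, hBt, ← Matrix.mul_assoc, hBSB, one_mulVec]
    have := h2 ▸ h3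
    linarith
  -- T has injective mulVec
  have hTinj : Function.Injective T.mulVec := by
    rw [← coe_mulVecLin]
    have h := T.mulVecLin.finrank_range_add_finrank_ker
    rw [Matrix.rank] at hTrank
    have h2 : Module.finrank ℝ (Fin 2 → ℝ) = 2 := by simp
    rw [h2, hTrank] at h
    exact LinearMap.ker_eq_bot.mp (Submodule.finrank_eq_zero.mp (by omega))
  -- G is positive definite
  have hGpd : (Tᵀ * Sgl⁻¹ * T).PosDef := by
    refine Matrix.PosDef.of_dotProduct_mulVec_pos ?_ ?_
    · have hTH : Tᴴ = Tᵀ := conjTranspose_eq_transpose_of_trivial T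
      have := isHermitian_conjTranspose_mul_mul T hSiPD.1
      rwa [hTH] at this
    · intro v hv
      have hTv : T *ᵥ v ≠ 0 := by
        intro h
        exact hv (hTinj (by simpa using h))
      have := hSiPD.dotProduct_mulVec_pos hTv
      have e : v ⬝ᵥ ((Tᵀ * Sgl⁻¹ * T) *ᵥ v) = (T *ᵥ v) ⬝ᵥ (Sgl⁻¹ *ᵥ (T *ᵥ v)) := by
        rw [← mulVec_mulVec, ← mulVec_mulVec, dotProduct_mulVec v Tᵀ, vecMul_transpose]
      simp only [star_trivial] at this ⊢
      rw [e]; exact this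
  set G : Matrix (Fin 2) (Fin 2) ℝ := Tᵀ * Sgl⁻¹ * T with hGdef
  have hGdet : IsUnit G.det := hGpd.det_pos.ne'.isUnit
  have hGit : G⁻¹ᵀ = G⁻¹ := by
    rw [Matrix.transpose_nonsing_inv]
    have : Gᵀ = G := by
      rw [← conjTranspose_eq_transpose_of_trivial]; exact hGpd.1
    rw [this]
  -- rewriting helpers
  have aBB : ∀ Z : Matrix (Fin n) (Fin n) ℝ, B * (B * Z) = Sgl⁻¹ * Z := fun Z => by
    rw [← Matrix.mul_assoc, hBB]
  have aGiG : ∀ Z : Matrix (Fin 2) (Fin n) ℝ,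
      G⁻¹ * (Tᵀ * (Sgl⁻¹ * (T * Z))) = Z := fun Z => by
    rw [show Tᵀ * (Sgl⁻¹ * (T * Z)) = G * Z by rw [hGdef]; simp [Matrix.mul_assoc],
      ← Matrix.mul_assoc, Matrix.nonsing_inv_mul G hGdet, Matrix.one_mul]
  set R : Matrix (Fin n) (Fin n) ℝ := B * (T * (G⁻¹ * (Tᵀ * B))) with hRdef
  have hRt : Rᵀ = R := by
    rw [hRdef]
    simp [transpose_mul, transpose_transpose, hBt, hGit, Matrix.mul_assoc]
  have hRR : R * R = R := by
    rw [hRdef]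
    simp only [Matrix.mul_assoc]
    rw [aBB, aGiG]
  -- key2 : the projection contraction
  have key2 : ∀ z : Fin n → ℝ, ((1 - R) *ᵥ z) ⬝ᵥ ((1 - R) *ᵥ z) ≤ z ⬝ᵥ z := by
    intro z
    have hQt : (1 - R)ᵀ = 1 - R := by rw [transpose_sub, transpose_one, hRt]
    have hQQ : (1 - R) * (1 - R) = 1 - R := by
      rw [Matrix.sub_mul, Matrix.one_mul, Matrix.mul_sub, Matrix.mul_one, hRR]
      abel
    have e1 : ((1 - R) *ᵥ z) ⬝ᵥ ((1 - R) *ᵥ z) = z ⬝ᵥ ((1 - R) *ᵥ z) := by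
      rw [dp_shift, hQt, hQQ]
    have e2 : z ⬝ᵥ (R *ᵥ z) = (R *ᵥ z) ⬝ᵥ (R *ᵥ z) := by
      rw [dp_shift, hRt, hRR]
    have e3 : z ⬝ᵥ ((1 - R) *ᵥ z) = z ⬝ᵥ z - z ⬝ᵥ (R *ᵥ z) := by
      rw [sub_mulVec, one_mulVec, dotProduct_sub]
    have h0 : 0 ≤ (R *ᵥ z) ⬝ᵥ (R *ᵥ z) := dp_self_nonneg _
    rw [e1, e3]
    linarith [e2 ▸ h0]
  -- the matrix identity : A = 1 - c • (B * ((1 - R) * B))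
  have hP' : P = T * (G⁻¹ * (Tᵀ * Sgl⁻¹)) := by
    rw [hP, hGdef]; simp [Matrix.mul_assoc]
  have hNBQB : Sgl⁻¹ * (1 - P) = B * ((1 - R) * B) := by
    rw [hRdef, hP']
    simp only [Matrix.sub_mul, Matrix.mul_sub, Matrix.one_mul, Matrix.mul_one, Matrix.mul_assoc]
    rw [hBB, aBB]
  have hAeq : A = 1 - c • (B * ((1 - R) * B)) := by
    rw [← hNBQB, hA]
    have hSgEq : Sg = Sgl - c • 1 := by rw [hSgl]; abel
    have h1 : Sg * Sgl⁻¹ = 1 - c • Sgl⁻¹ := by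
      rw [hSgEq, Matrix.sub_mul, smul_mul_assoc, Matrix.one_mul,
        Matrix.mul_nonsing_inv Sgl hSgldet]
    rw [h1, Matrix.sub_mul, Matrix.one_mul, smul_mul_assoc]
    abel
  -- the quantitative bound
  set u : Fin n → ℝ := (c • (B * ((1 - R) * B))) *ᵥ x with hu
  have hux : A *ᵥ x = x - u := by
    rw [hAeq, sub_mulVec, one_mulVec, hu]
  have huu : u ⬝ᵥ u ≤ x ⬝ᵥ x := by
    set z1 : Fin n → ℝ := B *ᵥ x with hz1
    set z2 : Fin n → ℝ := (1 - R) *ᵥ z1 with hz2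
    set z3 : Fin n → ℝ := B *ᵥ z2 with hz3
    have huz : u = c • z3 := by
      rw [hu, smul_mulVec, hz3, hz2, hz1]
      rw [← mulVec_mulVec, ← mulVec_mulVec]
    have h1 : c * (z3 ⬝ᵥ z3) ≤ z2 ⬝ᵥ z2 := key1 z2
    have h2 : z2 ⬝ᵥ z2 ≤ z1 ⬝ᵥ z1 := key2 z1
    have h3 : c * (z1 ⬝ᵥ z1) ≤ x ⬝ᵥ x := key1 x
    have e : u ⬝ᵥ u = c * (c * (z3 ⬝ᵥ z3)) := by
      rw [huz, smul_dotProduct, dotProduct_smul, smul_eq_mul, smul_eq_mul]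
    rw [e]
    calc c * (c * (z3 ⬝ᵥ z3)) ≤ c * (z2 ⬝ᵥ z2) := by
          exact mul_le_mul_of_nonneg_left h1 hcpos.le
      _ ≤ c * (z1 ⬝ᵥ z1) := mul_le_mul_of_nonneg_left h2 hcpos.le
      _ ≤ x ⬝ᵥ x := h3
  -- pass to Euclidean norms
  have hF : ∀ v : Fin n → ℝ,
      Real.sqrt (∑ i, (v i) ^ 2) = ‖(WithLp.equiv 2 (Fin n → ℝ)).symm v‖ := by
    intro v
    rw [EuclideanSpace.norm_eq]
    simp [sq_abs]
  have hdp : ∀ v : Fin n → ℝ, v ⬝ᵥ v = ∑ i, (v i) ^ 2 := by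
    intro v
    simp [dotProduct, sq]
  rw [hF, hF, hux]
  have hsub : (WithLp.equiv 2 (Fin n → ℝ)).symm (x - u)
      = (WithLp.equiv 2 (Fin n → ℝ)).symm x - (WithLp.equiv 2 (Fin n → ℝ)).symm u := rfl
  rw [hsub]
  have htri := norm_sub_le ((WithLp.equiv 2 (Fin n → ℝ)).symm x)
    ((WithLp.equiv 2 (Fin n → ℝ)).symm u)
  have hucmp : ‖(WithLp.equiv 2 (Fin n → ℝ)).symm u‖ ≤ ‖(WithLp.equiv 2 (Fin n → ℝ)).symm x‖ := by
    rw [← hF, ← hF]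
    apply Real.sqrt_le_sqrt
    rw [← hdp, ← hdp]
    exact huu
  linarith
end
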